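/- For every ε > 0 there exists n such that the pair p_n = A(BA(Aⁿ(1/6,2/3))) satisfies p_n ≠ (1/6,2/3), |p_n − (1/6,2/3)| < ε, and p_n ≺ (1/6,2/3) (i.e., the first coordinate of p_n is less than 1/6 and the second greater than 2/3); hence (1/6,2/3) is not isolated from the left in the order ≺. -/

import Mathlib

noncomputable def expA (p : ℝ × ℝ) : ℝ × ℝ :=
  (p.1 / (2 * (p.1 + 1)), (p.1 + p.2 + 1) / (2 * (p.1 + 1)))

noncomputable def expB (p : ℝ × ℝ) : ℝ × ℝ := (p.2 - 1/2, p.1 + 1/2)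

noncomputable def expBA (p : ℝ × ℝ) : ℝ × ℝ := expB (expA p)

noncomputable def pSeq (n : ℕ) : ℝ × ℝ := expA (expBA (expA^[n] (1/6, 2/3)))

lemma two_pow_big (n : ℕ) : ((n:ℝ)) + 3 < 2 ^ (n + 3) := by
  exact_mod_cast Nat.lt_two_pow_self (n := n + 3)

lemma aux_iter (n : ℕ) : expA^[n] ((1:ℝ)/6, (2:ℝ)/3) =
    (1 / (2 ^ (n + 3) - 2), (2 ^ (n + 3) - 2 - ((n : ℝ) + 2)) / (2 ^ (n + 3) - 2)) := by
  induction n with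
  | zero => simp [expA]; norm_num
  | succ n ih =>
      have hD : (0:ℝ) < 2 ^ (n + 3) - 2 := by
        have : (2:ℝ) ^ 3 ≤ 2 ^ (n + 3) := by
          apply pow_le_pow_right₀ (by norm_num); omega
        norm_num at this ⊢; linarith
      rw [Function.iterate_succ_apply', ih]
      unfold expA
      have h1 : (2:ℝ) ^ (n + 3) - 2 ≠ 0 := ne_of_gt hD
      have h2 : (2:ℝ) * (1 / (2 ^ (n + 3) - 2) + 1) ≠ 0 := by
        have : (0:ℝ) < 1 / (2 ^ (n + 3) - 2) + 1 := by positivity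
        positivity
      have h3 : (2:ℝ) ^ (n + 1 + 3) - 2 ≠ 0 := by
        have : (2:ℝ) ^ (n + 1 + 3) = 2 * 2 ^ (n + 3) := by ring
        rw [this]; nlinarith
      refine Prod.ext ?_ ?_ <;> push_cast <;> field_simp <;> ring

lemma aux_pSeq (n : ℕ) : pSeq n =
    ((2 ^ (n + 3) - 2 - ((n:ℝ) + 2)) / (6 * 2 ^ (n + 3) - 2 * n - 12),
     (4 * 2 ^ (n + 3) - 4 - ((n:ℝ) + 2)) / (6 * 2 ^ (n + 3) - 2 * n - 12)) := by
  have hbig := two_pow_big n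
  have hD : (0:ℝ) < 2 ^ (n + 3) - 2 := by linarith
  have h1 : (2:ℝ) ^ (n + 3) - 2 ≠ 0 := ne_of_gt hD
  rw [pSeq, aux_iter, expBA, expA, expB, expA]
  have h2 : (2:ℝ) * (1 / (2 ^ (n + 3) - 2) + 1) ≠ 0 := by
    have : (0:ℝ) < 1 / (2 ^ (n + 3) - 2) + 1 := by positivity
    positivity
  -- after B and A, the denominator of the last A
  have hE : (0:ℝ) < 6 * 2 ^ (n + 3) - 2 * n - 12 := by nlinarith
  have h3 : (6:ℝ) * 2 ^ (n + 3) - 2 * n - 12 ≠ 0 := ne_of_gt hE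
  clear h2
  have hx0 : (0:ℝ) ≤ (n:ℝ) := Nat.cast_nonneg n
  set x : ℝ := (n:ℝ) with hx
  generalize hPdef : (2:ℝ)^(n+3) = P at hbig hD h1 hE h3 ⊢
  have hP5 : (3:ℝ) < P := by nlinarith
  have hP1 : (P:ℝ) - 1 ≠ 0 := by nlinarith
  have hQ : (1/(P-2) + (P-2-(x+2)) / (P-2) + 1) / (2*(1/(P-2)+1)) - 1/2 + 1
      = (3*P - x - 6) / (2*(P-1)) := by
    have hP1' : (1:ℝ)/(P-2) + 1 ≠ 0 := by
      rw [div_add' _ _ _ h1]; exact div_ne_zero (by nlinarith) h1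
    field_simp
    ring
  rw [hQ]
  have hnum : 3*P - x - 6 ≠ 0 := by nlinarith
  have h2P1 : (2:ℝ)*(P-1) ≠ 0 := by nlinarith
  refine Prod.ext ?_ ?_ <;> simp only <;> field_simp <;>
    rw [div_eq_div_iff (by intro h; linarith) (by intro h; linarith)] <;> ring

theorem stmt_19 (ε : ℝ) (hε : 0 < ε) :
    ∃ n : ℕ, pSeq n ≠ (1/6, 2/3) ∧
      Real.sqrt (((pSeq n).1 - 1/6) ^ 2 + ((pSeq n).2 - 2/3) ^ 2) < ε ∧
      (pSeq n).1 < 1/6 ∧ (pSeq n).2 > 2/3 := by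
  -- choose n large so that (n+3)/2^(n+3) < ε
  have htend : Filter.Tendsto (fun k : ℕ => (k : ℝ) * (1/2) ^ k) Filter.atTop (nhds 0) :=
    tendsto_self_mul_const_pow_of_lt_one (by norm_num) (by norm_num)
  have hev := htend.eventually (gt_mem_nhds hε)
  obtain ⟨N, hN⟩ := Filter.eventually_atTop.mp hev
  refine ⟨N, ?_⟩
  set n := N with hn
  have ht : ((n:ℝ) + 3) / 2 ^ (n + 3) < ε := by
    have := hN (n + 3) (by omega)
    calc ((n:ℝ) + 3) / 2 ^ (n + 3) = ((n + 3 : ℕ) : ℝ) * (1/2) ^ (n + 3) := by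
          push_cast; rw [div_pow, one_pow]; ring
      _ < ε := this
  have hbig := two_pow_big n
  have hDpos : (0:ℝ) < 2 ^ (n + 3) := by positivity
  have hE : (0:ℝ) < 6 * 2 ^ (n + 3) - 2 * n - 12 := by nlinarith
  have hED : (2:ℝ) ^ (n + 3) ≤ 6 * 2 ^ (n + 3) - 2 * n - 12 := by nlinarith
  rw [aux_pSeq n]
  simp only
  set D : ℝ := 2 ^ (n + 3) with hD
  set E : ℝ := 6 * D - 2 * n - 12 with hEdef
  have h1 : (D - 2 - ((n:ℝ) + 2)) / E < 1/6 := by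
    rw [div_lt_div_iff₀ hE (by norm_num)]
    nlinarith
  have h2 : (4 * D - 4 - ((n:ℝ) + 2)) / E > 2/3 := by
    rw [gt_iff_lt, div_lt_div_iff₀ (by norm_num) hE]
    nlinarith
  refine ⟨?_, ?_, h1, h2⟩
  · intro heq
    have := congrArg Prod.fst heq
    simp only at this
    rw [this] at h1
    norm_num at h1
  · rw [Real.sqrt_lt' hε]
    set r : ℝ := (2 * (n:ℝ) + 6) / (3 * D) with hr
    have hrpos : 0 ≤ r := by positivity
    have ha : |(D - 2 - ((n:ℝ) + 2)) / E - 1/6| ≤ r := by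
      have heq : (D - 2 - ((n:ℝ) + 2)) / E - 1/6 = -((2 * n + 6) / (3 * E)) := by
        field_simp; ring
      rw [heq, abs_neg, abs_of_nonneg (by positivity), hr]
      rw [div_le_div_iff₀ (by positivity) (by positivity)]
      nlinarith
    have hb : |(4 * D - 4 - ((n:ℝ) + 2)) / E - 2/3| ≤ r := by
      have heq : (4 * D - 4 - ((n:ℝ) + 2)) / E - 2/3 = ((n:ℝ) + 6) / (3 * E) := by
        field_simp; ring
      rw [heq, abs_of_nonneg (by positivity), hr]
      rw [div_le_div_iff₀ (by positivity) (by positivity)]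
      nlinarith
    have hrlt : r < 2/3 * ε := by
      rw [hr]
      have : (2 * (n:ℝ) + 6) / (3 * D) = 2/3 * (((n:ℝ) + 3) / D) := by
        field_simp; ring
      rw [this]
      nlinarith
    nlinarith [sq_abs ((D - 2 - ((n:ℝ) + 2)) / E - 1/6),
      sq_abs ((4 * D - 4 - ((n:ℝ) + 2)) / E - 2/3),
      abs_nonneg ((D - 2 - ((n:ℝ) + 2)) / E - 1/6),
      abs_nonneg ((4 * D - 4 - ((n:ℝ) + 2)) / E - 2/3),
      sq_nonneg r, hε.le]
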